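/- Let ρ be a locally finite positive Borel measure on ℝ whose support is bounded from below. Define, for q ∈ ℝ, F(q) = π^{-1/2} ∫_{(1,∞)} E⁻¹ e^{-(q-√E)²} dρ(E) − 2π^{-3/2} ∫₁^∞ e^{-(q-k)²} dk, where the first integral is allowed to take the value +∞. If ∫₀^∞ F(q)² dq < ∞, then ∫_ℝ (1+E²)⁻¹ dρ(E) < ∞. -/

import Mathlib

open MeasureTheory Set
open scoped ENNReal

/-- The (possibly infinite) integral `∫_{(1,∞)} E⁻¹ e^{-(q-√E)²} dρ(E)`. -/
noncomputable def gaussPart (ρ : Measure ℝ) (q : ℝ) : ℝ≥0∞ :=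
  ∫⁻ E in Ioi (1 : ℝ), ENNReal.ofReal (E⁻¹ * Real.exp (-(q - Real.sqrt E) ^ 2)) ∂ρ

/-- The square `F(q)²` of
`F(q) = π^{-1/2} ∫_{(1,∞)} E⁻¹ e^{-(q-√E)²} dρ(E) − 2π^{-3/2} ∫₁^∞ e^{-(q-k)²} dk`,
interpreted as `+∞` when the first integral is `+∞`. -/
noncomputable def Fsq (ρ : Measure ℝ) (q : ℝ) : ℝ≥0∞ :=
  if gaussPart ρ q = ⊤ then ⊤
  else
    ENNReal.ofReal
      (((Real.sqrt Real.pi)⁻¹ * (gaussPart ρ q).toReal -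
          2 * Real.pi ^ (-(3 : ℝ) / 2) * ∫ k in Ioi (1 : ℝ), Real.exp (-(q - k) ^ 2)) ^ 2)

namespace Stmt7

lemma integrable_gauss (q : ℝ) : Integrable (fun k : ℝ => Real.exp (-(q - k)^2)) := by
  have h2 : Integrable (fun x : ℝ => Real.exp (-x^2)) := by
    simpa using integrable_exp_neg_mul_sq (b := 1) one_pos
  have h3 := h2.comp_sub_right q
  refine h3.congr (Filter.Eventually.of_forall fun k => ?_)
  ring_nf

lemma K_nonneg (q : ℝ) : 0 ≤ ∫ k in Ioi (1:ℝ), Real.exp (-(q - k)^2) :=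
  integral_nonneg fun k => (Real.exp_pos _).le

lemma K_le (q : ℝ) : (∫ k in Ioi (1:ℝ), Real.exp (-(q - k)^2)) ≤ Real.sqrt Real.pi := by
  have h1 : (∫ k in Ioi (1:ℝ), Real.exp (-(q - k)^2)) ≤ ∫ k : ℝ, Real.exp (-(q - k)^2) :=
    setIntegral_le_integral (integrable_gauss q)
      (Filter.Eventually.of_forall fun k => (Real.exp_pos _).le)
  have h2 : (∫ k : ℝ, Real.exp (-(q - k)^2)) = Real.sqrt Real.pi := by
    have h3 : (∫ k : ℝ, Real.exp (-(k - q)^2)) = ∫ x : ℝ, Real.exp (-x^2) :=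
      integral_sub_right_eq_self (fun x : ℝ => Real.exp (-x^2)) q
    have h4 : (∫ x : ℝ, Real.exp (-x^2)) = Real.sqrt Real.pi := by
      simpa using integral_gaussian 1
    calc (∫ k : ℝ, Real.exp (-(q - k)^2)) = ∫ k : ℝ, Real.exp (-(k - q)^2) := by
          congr 1; funext k; ring_nf
      _ = Real.sqrt Real.pi := h3.trans h4
  linarith

lemma measurable_kernel :
    Measurable (fun p : ℝ × ℝ => ENNReal.ofReal (p.2⁻¹ * Real.exp (-(p.1 - Real.sqrt p.2) ^ 2))) := by
  apply Measurable.ennreal_ofReal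
  exact (measurable_snd.inv).mul
    (Real.continuous_exp.comp
      (((continuous_fst.sub (Real.continuous_sqrt.comp continuous_snd)).pow 2).neg)).measurable

lemma measurable_gaussPart (ρ : Measure ℝ) [SigmaFinite ρ] : Measurable (gaussPart ρ) :=
  Measurable.lintegral_prod_right' (ν := ρ.restrict (Ioi 1)) measurable_kernel

lemma measurable_K : Measurable (fun q : ℝ => ∫ k in Ioi (1:ℝ), Real.exp (-(q - k)^2)) := by
  have h : StronglyMeasurable fun p : ℝ × ℝ => Real.exp (-(p.1 - p.2)^2) :=
    (Real.continuous_exp.comp ((continuous_fst.sub continuous_snd).pow 2).neg).stronglyMeasurable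
  exact (h.integral_prod_right' (ν := volume.restrict (Ioi 1))).measurable

lemma measurable_Fsq (ρ : Measure ℝ) [SigmaFinite ρ] : Measurable (Fsq ρ) := by
  unfold Fsq
  apply Measurable.ite
  · exact measurable_gaussPart ρ (measurableSet_singleton ⊤)
  · exact measurable_const
  · apply Measurable.ennreal_ofReal
    exact ((((measurable_gaussPart ρ).ennreal_toReal).const_mul _).sub
      (measurable_K.const_mul _)).pow_const 2

lemma sqrtpi_pos : (0:ℝ) < Real.sqrt Real.pi := Real.sqrt_pos.2 Real.pi_pos

lemma const_eq : Real.sqrt Real.pi * (2 * Real.pi ^ (-(3:ℝ)/2) * Real.sqrt Real.pi)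
    = 2 / Real.sqrt Real.pi := by
  have hπ : (0:ℝ) < Real.pi := Real.pi_pos
  have h : Real.pi ^ ((1:ℝ)/2) * Real.pi ^ (-(3:ℝ)/2) * Real.pi ^ ((1:ℝ)/2)
      = Real.pi ^ (-((1:ℝ)/2)) := by
    rw [← Real.rpow_add hπ, ← Real.rpow_add hπ]; norm_num
  calc Real.sqrt Real.pi * (2 * Real.pi ^ (-(3:ℝ)/2) * Real.sqrt Real.pi)
      = 2 * (Real.pi ^ ((1:ℝ)/2) * Real.pi ^ (-(3:ℝ)/2) * Real.pi ^ ((1:ℝ)/2)) := by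
        rw [Real.sqrt_eq_rpow]; ring
    _ = 2 * Real.pi ^ (-((1:ℝ)/2)) := by rw [h]
    _ = 2 / Real.sqrt Real.pi := by rw [Real.rpow_neg hπ.le, Real.sqrt_eq_rpow]; ring

lemma ofReal_sq_rpow_half (F : ℝ) : (ENNReal.ofReal (F^2)) ^ ((1:ℝ)/2) = ENNReal.ofReal |F| := by
  rw [← sq_abs, ENNReal.ofReal_pow (abs_nonneg F), ← ENNReal.rpow_natCast, ← ENNReal.rpow_mul]
  norm_num

lemma pointwise (ρ : Measure ℝ) (q : ℝ) :
    gaussPart ρ q ≤ ENNReal.ofReal (Real.sqrt Real.pi) * (Fsq ρ q) ^ ((1:ℝ)/2)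
      + ENNReal.ofReal (2 / Real.sqrt Real.pi) := by
  by_cases h : gaussPart ρ q = ⊤
  · have h1 : Fsq ρ q = ⊤ := by rw [Fsq, if_pos h]
    have h2 : (⊤:ℝ≥0∞) ^ ((1:ℝ)/2) = ⊤ := ENNReal.top_rpow_of_pos (by norm_num)
    have h3 : ENNReal.ofReal (Real.sqrt Real.pi) ≠ 0 := ne_of_gt (ENNReal.ofReal_pos.2 sqrtpi_pos)
    rw [h1, h2, ENNReal.mul_top h3, top_add]
    exact le_top
  · set G := (gaussPart ρ q).toReal with hG
    set K := ∫ k in Ioi (1:ℝ), Real.exp (-(q - k)^2) with hK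
    set F := (Real.sqrt Real.pi)⁻¹ * G - 2 * Real.pi ^ (-(3:ℝ)/2) * K with hF
    have h1 : Fsq ρ q = ENNReal.ofReal (F^2) := by rw [Fsq, if_neg h]
    have hGnn : 0 ≤ G := ENNReal.toReal_nonneg
    have hKnn : 0 ≤ K := K_nonneg q
    have hKle : K ≤ Real.sqrt Real.pi := K_le q
    have hc : (0:ℝ) ≤ 2 * Real.pi ^ (-(3:ℝ)/2) := by positivity
    have hGle : G ≤ Real.sqrt Real.pi * |F| + 2 / Real.sqrt Real.pi := by
      have e1 : G = Real.sqrt Real.pi * (F + 2 * Real.pi ^ (-(3:ℝ)/2) * K) := by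
        rw [hF]
        field_simp
        ring
      have e2 : Real.sqrt Real.pi * (F + 2 * Real.pi ^ (-(3:ℝ)/2) * K)
          ≤ Real.sqrt Real.pi * |F| + Real.sqrt Real.pi * (2 * Real.pi ^ (-(3:ℝ)/2) * K) := by
        have h' : Real.sqrt Real.pi * F ≤ Real.sqrt Real.pi * |F| :=
          mul_le_mul_of_nonneg_left (le_abs_self F) sqrtpi_pos.le
        rw [mul_add]
        exact add_le_add_left h' _
      have e3 : Real.sqrt Real.pi * (2 * Real.pi ^ (-(3:ℝ)/2) * K) ≤ 2 / Real.sqrt Real.pi := by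
        calc Real.sqrt Real.pi * (2 * Real.pi ^ (-(3:ℝ)/2) * K)
            ≤ Real.sqrt Real.pi * (2 * Real.pi ^ (-(3:ℝ)/2) * Real.sqrt Real.pi) :=
              mul_le_mul_of_nonneg_left (mul_le_mul_of_nonneg_left hKle hc) sqrtpi_pos.le
          _ = 2 / Real.sqrt Real.pi := const_eq
      linarith
    calc gaussPart ρ q = ENNReal.ofReal G := (ENNReal.ofReal_toReal h).symm
      _ ≤ ENNReal.ofReal (Real.sqrt Real.pi * |F| + 2 / Real.sqrt Real.pi) :=
          ENNReal.ofReal_le_ofReal hGle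
      _ ≤ ENNReal.ofReal (Real.sqrt Real.pi * |F|) + ENNReal.ofReal (2 / Real.sqrt Real.pi) :=
          ENNReal.ofReal_add_le
      _ = ENNReal.ofReal (Real.sqrt Real.pi) * (Fsq ρ q) ^ ((1:ℝ)/2)
            + ENNReal.ofReal (2 / Real.sqrt Real.pi) := by
          rw [h1, ofReal_sq_rpow_half, ENNReal.ofReal_mul sqrtpi_pos.le]

lemma CS (f : ℝ → ℝ≥0∞) (hf : Measurable f) (T : ℝ) :
    ∫⁻ q in Ioc (0:ℝ) T, (f q)^((1:ℝ)/2) ≤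
      (∫⁻ q in Ioc (0:ℝ) T, f q) ^ ((1:ℝ)/2) * (volume (Ioc (0:ℝ) T)) ^ ((1:ℝ)/2) := by
  have hmeas : AEMeasurable (fun q => (f q)^((1:ℝ)/2)) (volume.restrict (Ioc 0 T)) :=
    (hf.pow_const _).aemeasurable
  have h := ENNReal.lintegral_mul_le_Lp_mul_Lq (volume.restrict (Ioc (0:ℝ) T))
    (p := 2) (q := 2) ⟨by norm_num, by norm_num, by norm_num⟩ hmeas (aemeasurable_const (b := (1:ℝ≥0∞)))
  simp only [Pi.mul_apply, mul_one, ENNReal.one_rpow] at h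
  have e : (∫⁻ a in Ioc (0:ℝ) T, (f a ^ ((1:ℝ)/2)) ^ (2:ℝ)) = ∫⁻ a in Ioc (0:ℝ) T, f a :=
    lintegral_congr fun a => by rw [← ENNReal.rpow_mul]; norm_num
  rw [e, setLIntegral_one] at h
  simpa using h

/-- The main constant. -/
noncomputable def C₁ (ρ : Measure ℝ) : ℝ≥0∞ :=
  ENNReal.ofReal (Real.sqrt Real.pi) * (∫⁻ q in Ioi (0:ℝ), Fsq ρ q) ^ ((1:ℝ)/2)
    + ENNReal.ofReal (2 / Real.sqrt Real.pi)

lemma C₁_ne_top (ρ : Measure ℝ) (hF : (∫⁻ q in Ioi (0 : ℝ), Fsq ρ q) < ⊤) : C₁ ρ ≠ ⊤ := by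
  unfold C₁
  exact ENNReal.add_ne_top.2
    ⟨ENNReal.mul_ne_top ENNReal.ofReal_ne_top
      (ENNReal.rpow_lt_top_of_nonneg (by norm_num) hF.ne).ne, ENNReal.ofReal_ne_top⟩

lemma lint_gauss_le (ρ : Measure ℝ) [SigmaFinite ρ] {T : ℝ} (hT : 1 ≤ T) :
    ∫⁻ q in Ioc (0:ℝ) T, gaussPart ρ q ≤ C₁ ρ * ENNReal.ofReal T := by
  set A := ∫⁻ q in Ioi (0:ℝ), Fsq ρ q with hA
  have hvol : volume (Ioc (0:ℝ) T) = ENNReal.ofReal T := by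
    rw [Real.volume_Ioc, sub_zero]
  have hT1 : (1:ℝ≥0∞) ≤ ENNReal.ofReal T := by
    rw [← ENNReal.ofReal_one]; exact ENNReal.ofReal_le_ofReal hT
  have hrT : (ENNReal.ofReal T) ^ ((1:ℝ)/2) ≤ ENNReal.ofReal T := by
    calc (ENNReal.ofReal T) ^ ((1:ℝ)/2) ≤ (ENNReal.ofReal T) ^ (1:ℝ) :=
          ENNReal.rpow_le_rpow_of_exponent_le hT1 (by norm_num)
      _ = ENNReal.ofReal T := ENNReal.rpow_one _
  calc ∫⁻ q in Ioc (0:ℝ) T, gaussPart ρ q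
      ≤ ∫⁻ q in Ioc (0:ℝ) T,
          (ENNReal.ofReal (Real.sqrt Real.pi) * (Fsq ρ q) ^ ((1:ℝ)/2)
            + ENNReal.ofReal (2 / Real.sqrt Real.pi)) :=
        lintegral_mono fun q => pointwise ρ q
    _ = ENNReal.ofReal (Real.sqrt Real.pi) * (∫⁻ q in Ioc (0:ℝ) T, (Fsq ρ q) ^ ((1:ℝ)/2))
          + ENNReal.ofReal (2 / Real.sqrt Real.pi) * ENNReal.ofReal T := by
        rw [lintegral_add_right _ measurable_const,
          lintegral_const_mul' _ _ ENNReal.ofReal_ne_top, lintegral_const,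
          Measure.restrict_apply_univ, hvol]
    _ ≤ ENNReal.ofReal (Real.sqrt Real.pi) * (A ^ ((1:ℝ)/2) * ENNReal.ofReal T)
          + ENNReal.ofReal (2 / Real.sqrt Real.pi) * ENNReal.ofReal T := by
        gcongr
        calc (∫⁻ q in Ioc (0:ℝ) T, (Fsq ρ q) ^ ((1:ℝ)/2))
            ≤ (∫⁻ q in Ioc (0:ℝ) T, Fsq ρ q) ^ ((1:ℝ)/2) * (volume (Ioc (0:ℝ) T)) ^ ((1:ℝ)/2) :=
              CS _ (measurable_Fsq ρ) T
          _ ≤ A ^ ((1:ℝ)/2) * ENNReal.ofReal T := by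
              rw [hvol]
              exact mul_le_mul'
                (ENNReal.rpow_le_rpow (lintegral_mono_set Ioc_subset_Ioi_self) (by norm_num)) hrT
    _ = C₁ ρ * ENNReal.ofReal T := by
        unfold C₁; rw [← hA]; ring

lemma lower_bound (T : ℝ) {E : ℝ} (hE : 1 < E) (hT : Real.sqrt E + 1 ≤ T) :
    ENNReal.ofReal E⁻¹ ≤ ENNReal.ofReal (Real.exp 1) *
      ∫⁻ q in Ioc (0:ℝ) T, ENNReal.ofReal (E⁻¹ * Real.exp (-(q - Real.sqrt E)^2)) := by
  set c := Real.sqrt E with hc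
  have hc1 : 1 ≤ c := by
    rw [hc, show (1:ℝ) = Real.sqrt 1 by simp]
    exact Real.sqrt_le_sqrt hE.le
  have hsub : Ioc c (c+1) ⊆ Ioc 0 T := fun q hq =>
    ⟨lt_of_lt_of_le (by linarith) hq.1.le, le_trans hq.2 (by linarith)⟩
  have hEinv : (0:ℝ) ≤ E⁻¹ := inv_nonneg.2 (by linarith)
  have key : ENNReal.ofReal (E⁻¹ * (Real.exp 1)⁻¹) ≤
      ∫⁻ q in Ioc (0:ℝ) T, ENNReal.ofReal (E⁻¹ * Real.exp (-(q - c)^2)) := by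
    have h1 : ENNReal.ofReal (E⁻¹ * (Real.exp 1)⁻¹) =
        ∫⁻ _ in Ioc c (c+1), ENNReal.ofReal (E⁻¹ * (Real.exp 1)⁻¹) := by
      rw [lintegral_const, Measure.restrict_apply_univ, Real.volume_Ioc]
      norm_num
    rw [h1]
    refine le_trans (setLIntegral_mono ?_ ?_) (lintegral_mono_set hsub)
    · exact Measurable.ennreal_ofReal (measurable_const.mul
        (Real.continuous_exp.comp (((continuous_id.sub continuous_const).pow 2).neg)).measurable)
    · intro q hq
      apply ENNReal.ofReal_le_ofReal
      apply mul_le_mul_of_nonneg_left _ hEinv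
      rw [← Real.exp_neg]
      apply Real.exp_le_exp.2
      nlinarith [hq.1, hq.2]
  calc ENNReal.ofReal E⁻¹ = ENNReal.ofReal (Real.exp 1) * ENNReal.ofReal (E⁻¹ * (Real.exp 1)⁻¹) := by
        rw [← ENNReal.ofReal_mul (Real.exp_pos 1).le]
        congr 1
        field_simp
    _ ≤ _ := mul_le_mul_right key _

lemma tonelli (ρ : Measure ℝ) [SigmaFinite ρ] (T : ℝ) :
    (∫⁻ E in Ioi (1:ℝ), ∫⁻ q in Ioc (0:ℝ) T,
        ENNReal.ofReal (E⁻¹ * Real.exp (-(q - Real.sqrt E)^2)) ∂volume ∂ρ)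
      = ∫⁻ q in Ioc (0:ℝ) T, gaussPart ρ q := by
  have hm : AEMeasurable
      (Function.uncurry fun (E q : ℝ) => ENNReal.ofReal (E⁻¹ * Real.exp (-(q - Real.sqrt E)^2)))
      ((ρ.restrict (Ioi 1)).prod (volume.restrict (Ioc (0:ℝ) T))) := by
    exact (measurable_kernel.comp measurable_swap).aemeasurable
  rw [lintegral_lintegral_swap hm]
  rfl

lemma sqrt_four_pow (n : ℕ) : Real.sqrt ((4:ℝ)^(n+1)) = 2^(n+1) := by
  have h : ((2:ℝ)^(n+1))^2 = (4:ℝ)^(n+1) := by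
    rw [← pow_mul, mul_comm, pow_mul]; norm_num
  rw [← h, Real.sqrt_sq (by positivity)]

lemma dyadic (ρ : Measure ℝ) [SigmaFinite ρ] (n : ℕ) :
    (∫⁻ E in Ioc ((4:ℝ)^n) ((4:ℝ)^(n+1)), ENNReal.ofReal ((1+E^2)⁻¹) ∂ρ) ≤
      (ENNReal.ofReal ((4:ℝ)^n)⁻¹ * ENNReal.ofReal (Real.exp 1)) *
        (C₁ ρ * ENNReal.ofReal ((2:ℝ)^(n+1)+1)) := by
  set T : ℝ := (2:ℝ)^(n+1)+1 with hT
  have h2pos : (0:ℝ) < 2^(n+1) := by positivity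
  have hT1 : (1:ℝ) ≤ T := by rw [hT]; linarith
  have h4n : (1:ℝ) ≤ 4^n := one_le_pow₀ (by norm_num)
  set inner : ℝ → ℝ≥0∞ :=
    fun E => ∫⁻ q in Ioc (0:ℝ) T, ENNReal.ofReal (E⁻¹ * Real.exp (-(q - Real.sqrt E)^2))
    with hinner
  have hinner_meas : Measurable inner := by
    have hkm : Measurable (fun p : ℝ × ℝ => ENNReal.ofReal (p.1⁻¹ *
        Real.exp (-(p.2 - Real.sqrt p.1)^2))) := measurable_kernel.comp measurable_swap
    exact hkm.lintegral_prod_right' (ν := volume.restrict (Ioc (0:ℝ) T))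
  set D : ℝ≥0∞ := ENNReal.ofReal ((4:ℝ)^n)⁻¹ * ENNReal.ofReal (Real.exp 1) with hD
  have hDne : D ≠ ⊤ := ENNReal.mul_ne_top ENNReal.ofReal_ne_top ENNReal.ofReal_ne_top
  have hpw : ∀ E ∈ Ioc ((4:ℝ)^n) ((4:ℝ)^(n+1)),
      ENNReal.ofReal ((1+E^2)⁻¹) ≤ D * inner E := by
    intro E hE
    have hE1 : (1:ℝ) < E := lt_of_le_of_lt h4n hE.1
    have hEpos : (0:ℝ) < E := lt_trans one_pos hE1
    have hsq : Real.sqrt E + 1 ≤ T := by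
      have := Real.sqrt_le_sqrt hE.2
      rw [sqrt_four_pow] at this
      rw [hT]; linarith
    have step1 : ENNReal.ofReal ((1+E^2)⁻¹) ≤
        ENNReal.ofReal ((4:ℝ)^n)⁻¹ * ENNReal.ofReal E⁻¹ := by
      rw [← ENNReal.ofReal_mul (by positivity)]
      apply ENNReal.ofReal_le_ofReal
      rw [← mul_inv]
      apply inv_anti₀ (by positivity)
      nlinarith [hE.1, sq_nonneg E, sq_nonneg (E-1)]
    calc ENNReal.ofReal ((1+E^2)⁻¹) ≤ ENNReal.ofReal ((4:ℝ)^n)⁻¹ * ENNReal.ofReal E⁻¹ := step1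
      _ ≤ ENNReal.ofReal ((4:ℝ)^n)⁻¹ * (ENNReal.ofReal (Real.exp 1) * inner E) :=
          mul_le_mul_right (lower_bound T hE1 hsq) _
      _ = D * inner E := by rw [hD, mul_assoc]
  calc (∫⁻ E in Ioc ((4:ℝ)^n) ((4:ℝ)^(n+1)), ENNReal.ofReal ((1+E^2)⁻¹) ∂ρ)
      ≤ ∫⁻ E in Ioc ((4:ℝ)^n) ((4:ℝ)^(n+1)), D * inner E ∂ρ :=
        setLIntegral_mono (hinner_meas.const_mul D) hpw
    _ = D * ∫⁻ E in Ioc ((4:ℝ)^n) ((4:ℝ)^(n+1)), inner E ∂ρ :=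
        lintegral_const_mul' _ _ hDne
    _ ≤ D * ∫⁻ E in Ioi (1:ℝ), inner E ∂ρ := by
        apply mul_le_mul_right
        apply lintegral_mono_set
        intro E hE
        exact lt_of_le_of_lt h4n hE.1
    _ = D * ∫⁻ q in Ioc (0:ℝ) T, gaussPart ρ q := by rw [hinner, tonelli ρ T]
    _ ≤ D * (C₁ ρ * ENNReal.ofReal T) := mul_le_mul_right (lint_gauss_le ρ hT1) _

lemma union_eq : Ioi (1:ℝ) = ⋃ n : ℕ, Ioc ((4:ℝ)^n) ((4:ℝ)^(n+1)) := by
  ext x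
  simp only [mem_Ioi, mem_iUnion, mem_Ioc]
  constructor
  · intro hx
    have hex : ∃ k : ℕ, x ≤ 4^(k+1) := by
      obtain ⟨k, hk⟩ := pow_unbounded_of_one_lt x (by norm_num : (1:ℝ) < 4)
      exact ⟨k, le_trans hk.le (pow_le_pow_right₀ (by norm_num) (Nat.le_succ k))⟩
    classical
    refine ⟨Nat.find hex, ?_, Nat.find_spec hex⟩
    rcases Nat.eq_zero_or_pos (Nat.find hex) with h0 | hpos
    · rw [h0]; simpa using hx
    · obtain ⟨m, hm⟩ := Nat.exists_eq_succ_of_ne_zero hpos.ne'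
      have := Nat.find_min hex (m := m) (by omega)
      rw [hm]
      push_neg at this
      exact this
  · rintro ⟨n, h1, _⟩
    exact lt_of_le_of_lt (one_le_pow₀ (by norm_num)) h1

private lemma geom_aux (n : ℕ) : ((4:ℝ)^n)⁻¹ * ((2:ℝ)^(n+1)+1) ≤ 4 * ((2:ℝ)⁻¹)^n := by
  have h4 : (4:ℝ)^n = 2^n * 2^n := by rw [← mul_pow]; norm_num
  have hx : (1:ℝ) ≤ 2^n := one_le_pow₀ (by norm_num)
  rw [h4, inv_pow, pow_succ]
  calc (2^n*2^n : ℝ)⁻¹ * (2^n*2+1) ≤ (2^n*2^n : ℝ)⁻¹ * (4*2^n) := by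
        gcongr
        linarith
    _ = 4 * ((2:ℝ)^n)⁻¹ := by
        have h2n : (0:ℝ) < 2^n := by positivity
        field_simp

end Stmt7

open Stmt7 in
/-- Let `ρ` be a locally finite positive Borel measure on `ℝ` whose support
is bounded from below.  If `∫₀^∞ F(q)² dq < ∞`, then `∫_ℝ (1+E²)⁻¹ dρ(E) < ∞`. -/
theorem stmt_7 (ρ : Measure ℝ) [IsLocallyFiniteMeasure ρ]
    (a : ℝ) (hsupp : ρ (Iio a) = 0)
    (hF : (∫⁻ q in Ioi (0 : ℝ), Fsq ρ q) < ⊤) :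
    (∫⁻ E : ℝ, ENNReal.ofReal ((1 + E ^ 2)⁻¹) ∂ρ) < ⊤ := by
  have hIic : (∫⁻ E in Iic (1:ℝ), ENNReal.ofReal ((1 + E ^ 2)⁻¹) ∂ρ) < ⊤ := by
    have h1 : (∫⁻ E in Iic (1:ℝ), ENNReal.ofReal ((1 + E ^ 2)⁻¹) ∂ρ) ≤ ρ (Icc a 1) := by
      calc (∫⁻ E in Iic (1:ℝ), ENNReal.ofReal ((1 + E ^ 2)⁻¹) ∂ρ)
          ≤ ∫⁻ _ in Iic (1:ℝ), 1 ∂ρ := by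
            apply lintegral_mono
            intro E
            rw [← ENNReal.ofReal_one]
            apply ENNReal.ofReal_le_ofReal
            apply inv_le_one_of_one_le₀
            nlinarith [sq_nonneg E]
        _ = ρ (Iic 1) := setLIntegral_one _
        _ ≤ ρ (Iio a ∪ Icc a 1) := by
            apply measure_mono
            intro x hx
            rcases lt_or_ge x a with h | h
            · exact Or.inl h
            · exact Or.inr ⟨h, hx⟩
        _ ≤ ρ (Iio a) + ρ (Icc a 1) := measure_union_le _ _
        _ = ρ (Icc a 1) := by rw [hsupp, zero_add]
    exact lt_of_le_of_lt h1 isCompact_Icc.measure_lt_top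
  have hIoi : (∫⁻ E in Ioi (1:ℝ), ENNReal.ofReal ((1 + E ^ 2)⁻¹) ∂ρ) < ⊤ := by
    have h2 : (∫⁻ E in Ioi (1:ℝ), ENNReal.ofReal ((1 + E ^ 2)⁻¹) ∂ρ)
        ≤ ∑' n : ℕ, ∫⁻ E in Ioc ((4:ℝ)^n) ((4:ℝ)^(n+1)),
            ENNReal.ofReal ((1 + E ^ 2)⁻¹) ∂ρ := by
      rw [union_eq]
      exact lintegral_iUnion_le _ _
    have h3 : ∀ n : ℕ, (∫⁻ E in Ioc ((4:ℝ)^n) ((4:ℝ)^(n+1)),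
        ENNReal.ofReal ((1 + E ^ 2)⁻¹) ∂ρ) ≤
          (ENNReal.ofReal (Real.exp 1) * C₁ ρ * ENNReal.ofReal 4) *
            (ENNReal.ofReal 2⁻¹)^n := by
      intro n
      calc (∫⁻ E in Ioc ((4:ℝ)^n) ((4:ℝ)^(n+1)), ENNReal.ofReal ((1 + E ^ 2)⁻¹) ∂ρ)
          ≤ (ENNReal.ofReal ((4:ℝ)^n)⁻¹ * ENNReal.ofReal (Real.exp 1)) *
              (C₁ ρ * ENNReal.ofReal ((2:ℝ)^(n+1)+1)) := dyadic ρ n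
        _ = (ENNReal.ofReal (Real.exp 1) * C₁ ρ) *
              (ENNReal.ofReal ((4:ℝ)^n)⁻¹ * ENNReal.ofReal ((2:ℝ)^(n+1)+1)) := by ring
        _ ≤ (ENNReal.ofReal (Real.exp 1) * C₁ ρ) *
              ENNReal.ofReal (4 * ((2:ℝ)⁻¹)^n) := by
            apply mul_le_mul_right
            rw [← ENNReal.ofReal_mul (by positivity)]
            exact ENNReal.ofReal_le_ofReal (geom_aux n)
        _ = (ENNReal.ofReal (Real.exp 1) * C₁ ρ * ENNReal.ofReal 4) *
              (ENNReal.ofReal 2⁻¹)^n := by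
            rw [ENNReal.ofReal_mul (by norm_num), ENNReal.ofReal_pow (by norm_num)]
            ring
    have h4 : (∑' n : ℕ, ∫⁻ E in Ioc ((4:ℝ)^n) ((4:ℝ)^(n+1)),
        ENNReal.ofReal ((1 + E ^ 2)⁻¹) ∂ρ) ≤
          (ENNReal.ofReal (Real.exp 1) * C₁ ρ * ENNReal.ofReal 4) *
            ∑' n : ℕ, (ENNReal.ofReal 2⁻¹)^n := by
      rw [← ENNReal.tsum_mul_left]
      exact ENNReal.tsum_le_tsum h3
    have h5 : (∑' n : ℕ, (ENNReal.ofReal 2⁻¹)^n : ℝ≥0∞) ≠ ⊤ := by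
      rw [ENNReal.tsum_geometric]
      have hlt : ENNReal.ofReal 2⁻¹ < 1 := by
        rw [← ENNReal.ofReal_one]
        exact (ENNReal.ofReal_lt_ofReal_iff (by norm_num)).2 (by norm_num)
      exact ENNReal.inv_ne_top.2 (tsub_pos_of_lt hlt).ne'
    have h6 : (ENNReal.ofReal (Real.exp 1) * C₁ ρ * ENNReal.ofReal 4) *
        (∑' n : ℕ, (ENNReal.ofReal 2⁻¹)^n) < ⊤ := by
      apply ENNReal.mul_lt_top
      · exact (ENNReal.mul_lt_top
          (ENNReal.mul_lt_top ENNReal.ofReal_lt_top (C₁_ne_top ρ hF).lt_top)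
          ENNReal.ofReal_lt_top)
      · exact h5.lt_top
    exact lt_of_le_of_lt (h2.trans h4) h6
  calc (∫⁻ E : ℝ, ENNReal.ofReal ((1 + E ^ 2)⁻¹) ∂ρ)
      = (∫⁻ E in Iic (1:ℝ), ENNReal.ofReal ((1 + E ^ 2)⁻¹) ∂ρ)
        + ∫⁻ E in Ioi (1:ℝ), ENNReal.ofReal ((1 + E ^ 2)⁻¹) ∂ρ := by
        have h := lintegral_add_compl (μ := ρ) (fun E => ENNReal.ofReal ((1 + E ^ 2)⁻¹))
          (measurableSet_Iic (a := (1:ℝ)))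
        rw [compl_Iic] at h
        exact h.symm
    _ < ⊤ := ENNReal.add_lt_top.2 ⟨hIic, hIoi⟩
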